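/- Let E^n be Euclidean n-space with its canonical distance. Then for every p > 1, every measure μ ∈ W_p(E^n) has a unique nearest Dirac measure; that is, reach({δ_z : z ∈ E^n} ⊆ W_p(E^n)) = ∞. More generally, the same holds for any Hadamard manifold (complete, simply connected Riemannian manifold of nonpositive sectional curvature). -/

import Mathlib

open MeasureTheory ENNReal Set

noncomputable section

/-- The set of couplings (transference plans) between two measures. -/
def Couplings {X : Type*} [MeasurableSpace X] (μ ν : Measure X) :
    Set (Measure (X × X)) :=
  {π | π.map Prod.fst = μ ∧ π.map Prod.snd = ν}

/-- The `p`-Wasserstein (extended) distance between two measures. -/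
def Wp {X : Type*} [PseudoEMetricSpace X] [MeasurableSpace X] (p : ℝ)
    (μ ν : Measure X) : ℝ≥0∞ :=
  (⨅ π ∈ Couplings μ ν, ∫⁻ z, edist z.1 z.2 ^ p ∂π) ^ (1 / p)

/-- The `p`-Wasserstein space: probability measures with finite `p`-th moment. -/
def WSpace (X : Type*) [PseudoEMetricSpace X] [MeasurableSpace X] (p : ℝ) :
    Set (Measure X) :=
  {μ | IsProbabilityMeasure μ ∧ ∃ x₀ : X, ∫⁻ x, edist x x₀ ^ p ∂μ ≠ ⊤}

/-- The image of `X` in its Wasserstein space: the set of Dirac measures. -/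
def Diracs (X : Type*) [MeasurableSpace X] : Set (Measure X) :=
  Set.range (Measure.dirac : X → Measure X)

/-- Distance from a point to a set, with respect to a distance function `ρ`. -/
def distToSet {Y : Type*} (ρ : Y → Y → ℝ≥0∞) (y : Y) (A : Set Y) : ℝ≥0∞ :=
  ⨅ a ∈ A, ρ y a

/-- `y` has a unique metric projection onto `A`. -/
def HasUniqueProj {Y : Type*} (ρ : Y → Y → ℝ≥0∞) (A : Set Y) (y : Y) : Prop :=
  ∃! a, a ∈ A ∧ ρ y a = distToSet ρ y A

/-- The reach of `A` at `a ∈ A`, within the ambient set `S`: the supremum of radii `r`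
such that every point of the ball `B_r(a) ∩ S` has a unique metric projection onto `A`. -/
def reachAt {Y : Type*} (ρ : Y → Y → ℝ≥0∞) (S A : Set Y) (a : Y) : ℝ≥0∞ :=
  sSup {r : ℝ≥0∞ | ∀ y ∈ S, ρ a y < r → HasUniqueProj ρ A y}

/-- The global reach of `A` within the ambient set `S`. -/
def globalReach {Y : Type*} (ρ : Y → Y → ℝ≥0∞) (S A : Set Y) : ℝ≥0∞ :=
  ⨅ a ∈ A, reachAt ρ S A a

/-- A minimizing geodesic from `x` to `y`, parametrized proportionally on `[0,1]`. -/
def IsMinGeodesic {X : Type*} [PseudoMetricSpace X] (γ : ℝ → X) (x y : X) : Prop :=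
  γ 0 = x ∧ γ 1 = y ∧
    ∀ s ∈ Set.Icc (0:ℝ) 1, ∀ t ∈ Set.Icc (0:ℝ) 1, dist (γ s) (γ t) = |s - t| * dist x y

/-- A geodesic metric space: any two points are joined by a minimizing geodesic. -/
def IsGeodesicSpace (X : Type*) [PseudoMetricSpace X] : Prop :=
  ∀ x y : X, ∃ γ : ℝ → X, IsMinGeodesic γ x y

/-- `a` lies on some minimizing geodesic from `x` to `y`. -/
def OnMinGeodesic {X : Type*} [PseudoMetricSpace X] (a x y : X) : Prop :=
  ∃ γ : ℝ → X, ∃ t ∈ Set.Icc (0:ℝ) 1, IsMinGeodesic γ x y ∧ γ t = a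

/-- A complete metric space is CAT(0) if for all `z, y` there is `m` such that for all `x`,
`d(x,m)² ≤ (d(x,y)² + d(x,z)²)/2 − d(y,z)²/4`.  A Hadamard manifold (complete simply connected
Riemannian manifold of nonpositive sectional curvature), with its Riemannian distance, is
exactly a complete simply connected Riemannian manifold which is CAT(0). -/
def IsCAT0 (X : Type*) [MetricSpace X] : Prop :=
  ∀ z y : X, ∃ m : X, ∀ x : X,
    dist x m ^ 2 ≤ (dist x y ^ 2 + dist x z ^ 2) / 2 - dist y z ^ 2 / 4


open Filter

private lemma midpt_le {a b c m : ℝ} (ha : 0 ≤ a) (hb : 0 ≤ b) (hm : 0 ≤ m)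
    (hab : |a - b| ≤ c)
    (hmsq : m ^ 2 ≤ (a ^ 2 + b ^ 2) / 2 - c ^ 2 / 4) : m ≤ (a + b) / 2 := by
  have h1 : (a - b) ^ 2 ≤ c ^ 2 := by
    have := abs_le.mp hab
    nlinarith [this.1, this.2]
  refine le_of_pow_le_pow_left₀ two_ne_zero (by linarith) ?_
  nlinarith

private lemma conv_nonstrict {p a b c m : ℝ} (hp : 1 < p) (ha : 0 ≤ a) (hb : 0 ≤ b)
    (hm : 0 ≤ m) (hab : |a - b| ≤ c)
    (hmsq : m ^ 2 ≤ (a ^ 2 + b ^ 2) / 2 - c ^ 2 / 4) :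
    m ^ p ≤ (a ^ p + b ^ p) / 2 := by
  have hmab : m ≤ (a + b) / 2 := midpt_le ha hb hm hab hmsq
  have hcv := (strictConvexOn_rpow hp).convexOn.2 (mem_Ici.mpr ha) (mem_Ici.mpr hb)
    (by norm_num : (0:ℝ) ≤ 1/2) (by norm_num : (0:ℝ) ≤ 1/2) (by norm_num)
  simp only [smul_eq_mul] at hcv
  have h1 : m ^ p ≤ ((a + b) / 2) ^ p := Real.rpow_le_rpow hm hmab (by linarith)
  calc m ^ p ≤ ((a + b) / 2) ^ p := h1
    _ = (1/2 * a + 1/2 * b) ^ p := by ring_nf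
    _ ≤ 1/2 * a ^ p + 1/2 * b ^ p := hcv
    _ = (a ^ p + b ^ p) / 2 := by ring

private lemma conv_strict {p a b c m : ℝ} (hp : 1 < p) (ha : 0 ≤ a) (hb : 0 ≤ b)
    (hm : 0 ≤ m) (hab : |a - b| ≤ c) (hc : 0 < c) (hc2 : c ≤ a + b)
    (hmsq : m ^ 2 ≤ (a ^ 2 + b ^ 2) / 2 - c ^ 2 / 4) :
    m ^ p < (a ^ p + b ^ p) / 2 := by
  rcases eq_or_ne a b with hab' | hab'
  · subst hab'
    have hapos : 0 < a := by linarith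
    have hma : m < a := by nlinarith
    have : m ^ p < a ^ p := Real.rpow_lt_rpow hm hma (by linarith)
    calc m ^ p < a ^ p := this
      _ = (a ^ p + a ^ p) / 2 := by ring
  · have hmab : m ≤ (a + b) / 2 := midpt_le ha hb hm hab hmsq
    have hcv := (strictConvexOn_rpow hp).2 (mem_Ici.mpr ha) (mem_Ici.mpr hb) hab'
      (by norm_num : (0:ℝ) < 1/2) (by norm_num : (0:ℝ) < 1/2) (by norm_num)
    simp only [smul_eq_mul] at hcv
    have h1 : m ^ p ≤ ((a + b) / 2) ^ p := Real.rpow_le_rpow hm hmab (by linarith)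
    calc m ^ p ≤ ((a + b) / 2) ^ p := h1
      _ = (1/2 * a + 1/2 * b) ^ p := by ring_nf
      _ < 1/2 * a ^ p + 1/2 * b ^ p := hcv
      _ = (a ^ p + b ^ p) / 2 := by ring

/-- Uniform convexity gap on a compact region. -/
private lemma gap_lemma {p : ℝ} (hp : 1 < p) {ε : ℝ} (R D : ℝ) (hε : 0 < ε) :
    ∃ η : ℝ, 0 < η ∧ ∀ a b c m : ℝ, 0 ≤ a → a ≤ R → 0 ≤ b → b ≤ R →
      ε ≤ c → c ≤ D → |a - b| ≤ c → c ≤ a + b → 0 ≤ m →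
      m ^ 2 ≤ (a ^ 2 + b ^ 2) / 2 - c ^ 2 / 4 →
      m ^ p + η ≤ (a ^ p + b ^ p) / 2 := by
  classical
  set φ : ℝ × ℝ × ℝ → ℝ := fun q =>
    (q.1 ^ p + q.2.1 ^ p) / 2 - Real.sqrt ((q.1 ^ 2 + q.2.1 ^ 2) / 2 - q.2.2 ^ 2 / 4) ^ p
    with hφ
  set K : Set (ℝ × ℝ × ℝ) := {q | q.1 ∈ Icc 0 R ∧ q.2.1 ∈ Icc 0 R ∧ q.2.2 ∈ Icc ε D ∧
    |q.1 - q.2.1| ≤ q.2.2 ∧ q.2.2 ≤ q.1 + q.2.1} with hK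
  have c1 : IsClosed {q : ℝ × ℝ × ℝ | q.1 ∈ Icc 0 R} := isClosed_Icc.preimage continuous_fst
  have c2 : IsClosed {q : ℝ × ℝ × ℝ | q.2.1 ∈ Icc 0 R} :=
    isClosed_Icc.preimage (continuous_fst.comp continuous_snd)
  have c3 : IsClosed {q : ℝ × ℝ × ℝ | q.2.2 ∈ Icc ε D} :=
    isClosed_Icc.preimage (continuous_snd.comp continuous_snd)
  have c4 : IsClosed {q : ℝ × ℝ × ℝ | |q.1 - q.2.1| ≤ q.2.2} :=
    isClosed_le ((continuous_fst.sub (continuous_fst.comp continuous_snd)).abs)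
      (continuous_snd.comp continuous_snd)
  have c5 : IsClosed {q : ℝ × ℝ × ℝ | q.2.2 ≤ q.1 + q.2.1} :=
    isClosed_le (continuous_snd.comp continuous_snd)
      (continuous_fst.add (continuous_fst.comp continuous_snd))
  have hKclosed : IsClosed K := c1.inter (c2.inter (c3.inter (c4.inter c5)))
  have hKc : IsCompact K := by
    have h1 : IsCompact (Icc 0 R ×ˢ Icc 0 R ×ˢ Icc ε D : Set (ℝ × ℝ × ℝ)) :=
      (isCompact_Icc).prod ((isCompact_Icc).prod isCompact_Icc)
    exact h1.of_isClosed_subset hKclosed (fun q hq => ⟨hq.1, hq.2.1, hq.2.2.1⟩)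
  -- φ is continuous
  have hrpow : Continuous fun x : ℝ => x ^ p := by
    refine continuous_iff_continuousAt.mpr fun x => Real.continuousAt_rpow_const x p ?_
    exact Or.inr (by linarith)
  have hφc : Continuous φ := by
    apply Continuous.sub
    · exact ((hrpow.comp continuous_fst).add
        (hrpow.comp (continuous_fst.comp continuous_snd))).div_const 2
    · refine hrpow.comp (Real.continuous_sqrt.comp ?_)
      exact (((continuous_fst.pow 2).add
        ((continuous_fst.comp continuous_snd).pow 2)).div_const 2).sub
        (((continuous_snd.comp continuous_snd).pow 2).div_const 4)
  -- φ is positive on K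
  have hφpos : ∀ q ∈ K, 0 < φ q := by
    rintro ⟨a, b, c⟩ ⟨⟨ha0, haR⟩, ⟨hb0, hbR⟩, ⟨hcε, hcD⟩, habc, hcab⟩
    dsimp only at ha0 haR hb0 hbR hcε hcD habc hcab
    have hc0 : (0:ℝ) < c := lt_of_lt_of_le hε hcε
    have harg : 0 ≤ (a ^ 2 + b ^ 2) / 2 - c ^ 2 / 4 := by
      nlinarith [sq_nonneg (a - b), hcab, hc0.le]
    have hs := Real.sq_sqrt harg
    have := conv_strict hp ha0 hb0 (Real.sqrt_nonneg _) habc (by linarith) hcab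
      (le_of_eq hs)
    simpa [hφ, sub_pos] using this
  rcases K.eq_empty_or_nonempty with hKe | hKne
  · refine ⟨1, one_pos, fun a b c m ha0 haR hb0 hbR hcε hcD habc hcab hm0 hmsq => ?_⟩
    exact absurd (by exact ⟨⟨ha0, haR⟩, ⟨hb0, hbR⟩, ⟨hcε, hcD⟩, habc, hcab⟩ :
      (a, b, c) ∈ K) (by simp [hKe])
  · obtain ⟨q₀, hq₀K, hq₀⟩ := hKc.exists_isMinOn hKne hφc.continuousOn
    refine ⟨φ q₀, hφpos q₀ hq₀K, fun a b c m ha0 haR hb0 hbR hcε hcD habc hcab hm0 hmsq => ?_⟩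
    have hmem : (a, b, c) ∈ K := ⟨⟨ha0, haR⟩, ⟨hb0, hbR⟩, ⟨hcε, hcD⟩, habc, hcab⟩
    have hle : φ q₀ ≤ φ (a, b, c) := hq₀ hmem
    have harg : 0 ≤ (a ^ 2 + b ^ 2) / 2 - c ^ 2 / 4 := by
      nlinarith [sq_nonneg m]
    have hmsqrt : m ≤ Real.sqrt ((a ^ 2 + b ^ 2) / 2 - c ^ 2 / 4) :=
      (Real.le_sqrt hm0 harg).mpr hmsq
    have h2 : m ^ p ≤ Real.sqrt ((a ^ 2 + b ^ 2) / 2 - c ^ 2 / 4) ^ p :=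
      Real.rpow_le_rpow hm0 hmsqrt (by linarith)
    have hval : φ (a, b, c) = (a ^ p + b ^ p) / 2 -
        Real.sqrt ((a ^ 2 + b ^ 2) / 2 - c ^ 2 / 4) ^ p := rfl
    rw [hval] at hle
    linarith [h2, hle]

section Main
variable {M : Type*} [MetricSpace M] [MeasurableSpace M] [BorelSpace M]
variable {p : ℝ} {μ : Measure M}

private lemma edist_pow_meas (p : ℝ) (z : M) :
    Measurable fun x : M => edist x z ^ p :=
  (continuous_id.edist continuous_const).measurable.pow_const p

private lemma edist_rpow_eq (hp0 : 0 < p) (x z : M) :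
    edist x z ^ p = ENNReal.ofReal (dist x z ^ p) := by
  rw [edist_dist, ENNReal.ofReal_rpow_of_nonneg dist_nonneg hp0.le]

private lemma dist_facts (y1 y2 x : M) :
    |dist x y1 - dist x y2| ≤ dist y1 y2 ∧ dist y1 y2 ≤ dist x y1 + dist x y2 := by
  constructor
  · have := abs_dist_sub_le y1 y2 x
    rwa [dist_comm y1 x, dist_comm y2 x] at this
  · have := dist_triangle y1 x y2
    rwa [dist_comm y1 x] at this

private lemma lintegral_half (f g : M → ℝ≥0∞) (hf : Measurable f) :
    ∫⁻ x, (f x + g x) / 2 ∂μ = (∫⁻ x, f x ∂μ + ∫⁻ x, g x ∂μ) / 2 := by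
  simp_rw [div_eq_mul_inv]
  rw [lintegral_mul_const' 2⁻¹ _ (by simp), lintegral_add_left hf]

/-- Integrated midpoint inequality, non-strict version. -/
private lemma mid_integral_le (hp : 1 < p) {y1 y2 m : M}
    (hm : ∀ x : M, dist x m ^ 2 ≤
      (dist x y1 ^ 2 + dist x y2 ^ 2) / 2 - dist y1 y2 ^ 2 / 4) :
    ∫⁻ x, edist x m ^ p ∂μ ≤
      (∫⁻ x, edist x y1 ^ p ∂μ + ∫⁻ x, edist x y2 ^ p ∂μ) / 2 := by
  have hp0 : (0:ℝ) < p := by linarith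
  have hpt : ∀ x : M, edist x m ^ p ≤ (edist x y1 ^ p + edist x y2 ^ p) / 2 := by
    intro x
    obtain ⟨hab, hc2⟩ := dist_facts y1 y2 x
    have hre := conv_nonstrict hp (dist_nonneg (x := x) (y := y1)) dist_nonneg
      dist_nonneg hab (hm x)
    rw [edist_rpow_eq hp0, edist_rpow_eq hp0, edist_rpow_eq hp0,
      ← ENNReal.ofReal_add (Real.rpow_nonneg dist_nonneg p) (Real.rpow_nonneg dist_nonneg p),
      ← ENNReal.ofReal_ofNat 2, ← ENNReal.ofReal_div_of_pos two_pos]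
    exact ENNReal.ofReal_le_ofReal hre
  calc ∫⁻ x, edist x m ^ p ∂μ ≤ ∫⁻ x, (edist x y1 ^ p + edist x y2 ^ p) / 2 ∂μ :=
        lintegral_mono hpt
    _ = _ := lintegral_half _ _ (edist_pow_meas p y1)

/-- Integrated midpoint inequality with a gap on a good set. -/
private lemma mid_integral_gap (hp : 1 < p) {y1 y2 m : M}
    (hm : ∀ x : M, dist x m ^ 2 ≤
      (dist x y1 ^ 2 + dist x y2 ^ 2) / 2 - dist y1 y2 ^ 2 / 4)
    {ε R D η : ℝ} (hη : 0 ≤ η)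
    (hc1 : ε ≤ dist y1 y2) (hcD : dist y1 y2 ≤ D)
    (hgap : ∀ a b c m' : ℝ, 0 ≤ a → a ≤ R → 0 ≤ b → b ≤ R →
      ε ≤ c → c ≤ D → |a - b| ≤ c → c ≤ a + b → 0 ≤ m' →
      m' ^ 2 ≤ (a ^ 2 + b ^ 2) / 2 - c ^ 2 / 4 →
      m' ^ p + η ≤ (a ^ p + b ^ p) / 2) :
    ∫⁻ x, edist x m ^ p ∂μ +
        ENNReal.ofReal η * μ {x | dist x y1 ≤ R ∧ dist x y2 ≤ R} ≤
      (∫⁻ x, edist x y1 ^ p ∂μ + ∫⁻ x, edist x y2 ^ p ∂μ) / 2 := by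
  have hp0 : (0:ℝ) < p := by linarith
  set G : Set M := {x | dist x y1 ≤ R ∧ dist x y2 ≤ R} with hG
  have hGm : MeasurableSet G := by
    exact (measurableSet_le ((continuous_id.dist continuous_const).measurable)
        measurable_const).inter
      (measurableSet_le ((continuous_id.dist continuous_const).measurable) measurable_const)
  have hpt : ∀ x : M, edist x m ^ p + G.indicator (fun _ => ENNReal.ofReal η) x ≤
      (edist x y1 ^ p + edist x y2 ^ p) / 2 := by
    intro x
    obtain ⟨hab, hc2⟩ := dist_facts y1 y2 x
    rw [edist_rpow_eq hp0, edist_rpow_eq hp0, edist_rpow_eq hp0,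
      ← ENNReal.ofReal_add (Real.rpow_nonneg dist_nonneg p) (Real.rpow_nonneg dist_nonneg p),
      ← ENNReal.ofReal_ofNat 2, ← ENNReal.ofReal_div_of_pos two_pos]
    by_cases hx : x ∈ G
    · rw [indicator_of_mem hx]
      have hre := hgap (dist x y1) (dist x y2) (dist y1 y2) (dist x m)
        dist_nonneg hx.1 dist_nonneg hx.2 hc1 hcD hab hc2 dist_nonneg (hm x)
      rw [← ENNReal.ofReal_add (Real.rpow_nonneg dist_nonneg p) hη]
      exact ENNReal.ofReal_le_ofReal hre
    · rw [indicator_of_notMem hx, add_zero]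
      exact ENNReal.ofReal_le_ofReal
        (conv_nonstrict hp dist_nonneg dist_nonneg dist_nonneg hab (hm x))
  calc ∫⁻ x, edist x m ^ p ∂μ + ENNReal.ofReal η * μ G
      = ∫⁻ x, (edist x m ^ p + G.indicator (fun _ => ENNReal.ofReal η) x) ∂μ := by
        rw [lintegral_add_left (edist_pow_meas p m), lintegral_indicator_const hGm]
    _ ≤ ∫⁻ x, (edist x y1 ^ p + edist x y2 ^ p) / 2 ∂μ := lintegral_mono hpt
    _ = _ := lintegral_half _ _ (edist_pow_meas p y1)

/-- Markov/Chebyshev tail bound. -/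
private lemma tail_bound (hp0 : 0 < p) (z : M) {R : ℝ} (hR : 0 < R) :
    μ {x | ¬ dist x z ≤ R} ≤ (∫⁻ x, edist x z ^ p ∂μ) / ENNReal.ofReal (R ^ p) := by
  have h1 : {x : M | ¬ dist x z ≤ R} ⊆ {x | ENNReal.ofReal (R ^ p) ≤ edist x z ^ p} := by
    intro x hx
    simp only [mem_setOf_eq, not_le] at hx ⊢
    rw [edist_rpow_eq hp0]
    exact ENNReal.ofReal_le_ofReal (Real.rpow_le_rpow hR.le hx.le hp0.le)
  refine (measure_mono h1).trans (meas_ge_le_lintegral_div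
    (edist_pow_meas p z).aemeasurable ?_ ?_)
  · simpa [ENNReal.ofReal_pos] using Real.rpow_pos_of_pos hR p
  · exact ENNReal.ofReal_ne_top
  
private lemma exists_radius (hp0 : 0 < p) (C : ℝ≥0∞) (hC : C ≠ ⊤) :
    ∃ R : ℝ, 0 < R ∧ C ≤ ENNReal.ofReal (R ^ p) := by
  refine ⟨(C.toReal + 1) ^ (1/p), Real.rpow_pos_of_pos (by positivity) _, ?_⟩
  rw [← Real.rpow_mul (by positivity), one_div_mul_cancel hp0.ne', Real.rpow_one]
  calc C = ENNReal.ofReal C.toReal := (ENNReal.ofReal_toReal hC).symm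
    _ ≤ _ := ENNReal.ofReal_le_ofReal (by linarith)

theorem exists_unique_min (hp : 1 < p) (hcat : IsCAT0 M) [CompleteSpace M]
    (μ : Measure M) [IsProbabilityMeasure μ] {x₀ : M}
    (hx₀ : ∫⁻ x, edist x x₀ ^ p ∂μ ≠ ⊤) :
    ∃! z : M, ∫⁻ x, edist x z ^ p ∂μ = ⨅ w : M, ∫⁻ x, edist x w ^ p ∂μ := by
  have hp0 : (0:ℝ) < p := by linarith
  set F : M → ℝ≥0∞ := fun z => ∫⁻ x, edist x z ^ p ∂μ with hF
  set V : ℝ≥0∞ := ⨅ w, F w with hV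
  have hVF : ∀ w, V ≤ F w := fun w => iInf_le F w
  have hVt : V ≠ ⊤ := fun h => hx₀ (eq_top_iff.mpr (h ▸ hVF x₀))
  -- uniqueness
  have huniq : ∀ y1 y2 : M, F y1 = V → F y2 = V → y1 = y2 := by
    intro y1 y2 h1 h2
    by_contra hne
    obtain ⟨m, hm⟩ := hcat y2 y1
    have hcpos : 0 < dist y1 y2 := dist_pos.mpr hne
    -- strict pointwise inequality
    have hpt : ∀ x : M, edist x m ^ p < (edist x y1 ^ p + edist x y2 ^ p) / 2 := by
      intro x
      obtain ⟨hab, hc2⟩ := dist_facts y1 y2 x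
      have hre := conv_strict hp (dist_nonneg (x := x) (y := y1)) dist_nonneg dist_nonneg
        hab hcpos hc2 (hm x)
      rw [edist_rpow_eq hp0, edist_rpow_eq hp0, edist_rpow_eq hp0,
        ← ENNReal.ofReal_add (Real.rpow_nonneg dist_nonneg p) (Real.rpow_nonneg dist_nonneg p),
        ← ENNReal.ofReal_ofNat 2, ← ENNReal.ofReal_div_of_pos two_pos]
      exact (ENNReal.ofReal_lt_ofReal_iff
        (lt_of_le_of_lt (Real.rpow_nonneg dist_nonneg p) hre)).mpr hre
    -- the integrals agree
    set g : M → ℝ≥0∞ := fun x => (edist x y1 ^ p + edist x y2 ^ p) / 2 with hg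
    have hgmeas : Measurable g :=
      (((edist_pow_meas p y1).add (edist_pow_meas p y2)).div_const 2)
    have hgint : ∫⁻ x, g x ∂μ = V := by
      rw [hg, lintegral_half _ _ (edist_pow_meas p y1)]
      show (F y1 + F y2) / 2 = V
      rw [h1, h2, ENNReal.add_div, ENNReal.add_halves]
    have hFmV : (∫⁻ x, edist x m ^ p ∂μ) = V := by
      refine le_antisymm ?_ (hVF m)
      have := mid_integral_le (μ := μ) hp hm
      calc ∫⁻ x, edist x m ^ p ∂μ ≤ (F y1 + F y2) / 2 := this
        _ = V := by rw [h1, h2, ENNReal.add_div, ENNReal.add_halves]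
    -- subtraction argument
    have hsub : ∫⁻ x, (g x - edist x m ^ p) ∂μ = 0 := by
      rw [lintegral_sub (edist_pow_meas p m) (by rw [hFmV]; exact hVt)
        (ae_of_all μ fun x => (hpt x).le)]
      rw [hgint, hFmV, tsub_self]
    have hae : (fun x => g x - edist x m ^ p) =ᵐ[μ] 0 :=
      (lintegral_eq_zero_iff (hgmeas.sub (edist_pow_meas p m))).mp hsub
    have hempty : μ {x : M | ¬ (g x - edist x m ^ p = 0)} = 0 := by
      have := ae_iff.mp hae
      simpa using this
    have huniv : {x : M | ¬ (g x - edist x m ^ p = 0)} = univ := by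
      ext x
      simp only [mem_setOf_eq, mem_univ, iff_true]
      intro h0
      have hle : g x ≤ edist x m ^ p := tsub_eq_zero_iff_le.mp h0
      exact absurd (lt_of_lt_of_le (hpt x) hle) (lt_irrefl _)
    rw [huniv, measure_univ] at hempty
    exact one_ne_zero hempty
  -- minimizing sequence
  have hseq : ∀ k : ℕ, ∃ z : M, F z < V + (↑(k+1) : ℝ≥0∞)⁻¹ := by
    intro k
    have h1 : V < V + (↑(k+1) : ℝ≥0∞)⁻¹ :=
      ENNReal.lt_add_right hVt (by simp)
    exact iInf_lt_iff.mp h1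
  choose z hz using hseq
  have hFz1 : ∀ k, F (z k) ≤ V + 1 := by
    intro k
    refine (hz k).le.trans (add_le_add_right ?_ V)
    simp [ENNReal.inv_le_one]
  -- a ball of measure > 1/2
  obtain ⟨r, hr⟩ : ∃ r : ℕ, 1/2 < μ (Metric.closedBall x₀ r) := by
    have hmono : Monotone (fun n : ℕ => Metric.closedBall x₀ (n:ℝ)) := fun i j hij =>
      Metric.closedBall_subset_closedBall (by exact_mod_cast hij)
    have hub : ⋃ n : ℕ, Metric.closedBall x₀ (n:ℝ) = univ := by
      ext x
      simp only [mem_iUnion, Metric.mem_closedBall, mem_univ, iff_true]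
      exact ⟨⌈dist x x₀⌉₊, Nat.le_ceil _⟩
    have ht := tendsto_measure_iUnion_atTop (μ := μ) hmono
    rw [hub, measure_univ] at ht
    exact (ht.eventually (lt_mem_nhds (by norm_num : (1/2 : ℝ≥0∞) < 1))).exists
  -- uniform bound on minimizing points
  obtain ⟨T, hT0, hTC⟩ := exists_radius hp0 (2 * (V + 1))
    (by finiteness)
  set D : ℝ := r + T with hD
  have hDbound : ∀ w : M, F w ≤ V + 1 → dist w x₀ ≤ D := by
    intro w hw
    by_contra hcon
    push_neg at hcon
    have hptb : ∀ x ∈ Metric.closedBall x₀ (r:ℝ), ENNReal.ofReal (T ^ p) ≤ edist x w ^ p := by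
      intro x hx
      have hxr : dist x x₀ ≤ (r:ℝ) := Metric.mem_closedBall.mp hx
      have h1 : T ≤ dist x w := by
        have h2 := dist_triangle w x x₀
        rw [dist_comm x w]
        rw [hD] at hcon
        linarith
      rw [edist_rpow_eq hp0]
      exact ENNReal.ofReal_le_ofReal (Real.rpow_le_rpow hT0.le h1 hp0.le)
    have h2 : ENNReal.ofReal (T ^ p) * μ (Metric.closedBall x₀ (r:ℝ)) ≤ F w := by
      calc ENNReal.ofReal (T ^ p) * μ (Metric.closedBall x₀ (r:ℝ))
          = ∫⁻ _ in Metric.closedBall x₀ (r:ℝ), ENNReal.ofReal (T ^ p) ∂μ :=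
            (setLIntegral_const _ _).symm
        _ ≤ ∫⁻ x in Metric.closedBall x₀ (r:ℝ), edist x w ^ p ∂μ :=
            setLIntegral_mono (edist_pow_meas p w) hptb
        _ ≤ F w := setLIntegral_le_lintegral _ _
    have h3 : V + 1 < 2 * (V + 1) * μ (Metric.closedBall x₀ (r:ℝ)) := by
      have hne0 : (2 : ℝ≥0∞) * (V + 1) ≠ 0 := by
        exact mul_ne_zero (by norm_num) (by simp)
      have hnet : (2 : ℝ≥0∞) * (V + 1) ≠ ⊤ := by finiteness
      have := (ENNReal.mul_lt_mul_iff_right hne0 hnet).mpr hr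
      calc V + 1 = 2 * (V + 1) * (1/2) := by
            rw [mul_comm, ← mul_assoc, one_div,
              ENNReal.inv_mul_cancel two_ne_zero ENNReal.ofNat_ne_top, one_mul]
        _ < _ := this
    have h4 : 2 * (V + 1) * μ (Metric.closedBall x₀ (r:ℝ)) ≤
        ENNReal.ofReal (T ^ p) * μ (Metric.closedBall x₀ (r:ℝ)) :=
      mul_le_mul_left hTC _
    exact absurd ((h3.trans_le h4).trans_le (h2.trans hw)) (lt_irrefl _)
  -- Cauchy
  have hcauchy : CauchySeq z := by
    rw [Metric.cauchySeq_iff]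
    intro ε hε
    obtain ⟨R, hR0, hRC⟩ := exists_radius hp0 (8 * (V + 1)) (by finiteness)
    obtain ⟨η, hη, hgap⟩ := gap_lemma hp R (2*D) hε
    obtain ⟨N, hN⟩ := ENNReal.exists_inv_nat_lt
      (a := ENNReal.ofReal η / 8) (by simp [ENNReal.div_eq_zero_iff, hη])
    refine ⟨N + 1, fun j hj k hk => ?_⟩
    by_contra hcon
    push_neg at hcon
    obtain ⟨m, hm⟩ := hcat (z k) (z j)
    set G : Set M := {x | dist x (z j) ≤ R ∧ dist x (z k) ≤ R} with hGdef
    -- measure of complement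
    have htail : ∀ i, F (z i) ≤ V + 1 → μ {x | ¬ dist x (z i) ≤ R} ≤ 1/8 := by
      intro i hi
      refine (tail_bound hp0 (z i) hR0).trans ?_
      calc F (z i) / ENNReal.ofReal (R ^ p) ≤ (V + 1) / (8 * (V + 1)) := by
            exact ENNReal.div_le_div hi hRC
        _ ≤ 1/8 := by
            rw [ENNReal.div_le_iff (mul_ne_zero (by norm_num) (by simp)) (by finiteness)]
            calc (V+1) = 1/8 * (8 * (V+1)) := by
                  rw [← mul_assoc, one_div,
                    ENNReal.inv_mul_cancel (by norm_num) (by norm_num), one_mul]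
              _ ≤ _ := le_refl _
    have hGc : μ Gᶜ ≤ 1/4 := by
      have hsubset : Gᶜ ⊆ {x | ¬ dist x (z j) ≤ R} ∪ {x | ¬ dist x (z k) ≤ R} := by
        intro x hx
        simp only [hGdef, mem_compl_iff, mem_setOf_eq, not_and_or] at hx
        exact hx
      calc μ Gᶜ ≤ μ ({x | ¬ dist x (z j) ≤ R} ∪ {x | ¬ dist x (z k) ≤ R}) :=
            measure_mono hsubset
        _ ≤ μ {x | ¬ dist x (z j) ≤ R} + μ {x | ¬ dist x (z k) ≤ R} := measure_union_le _ _
        _ ≤ 1/8 + 1/8 := add_le_add (htail j (hFz1 j)) (htail k (hFz1 k))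
        _ = 1/4 := by
            rw [← ENNReal.add_div, show (1+1 : ℝ≥0∞) = 2 from by norm_num,
              ENNReal.div_eq_div_iff (by norm_num) (by norm_num) (by norm_num) (by norm_num)]
            norm_num
    have hGmeas : (1:ℝ≥0∞)/2 ≤ μ G := by
      have h1 : (1:ℝ≥0∞) ≤ μ G + μ Gᶜ := by
        rw [← measure_univ (μ := μ)]
        exact (measure_mono (by simp : (univ : Set M) ⊆ G ∪ Gᶜ)).trans (measure_union_le _ _)
      have h2 : (1:ℝ≥0∞) ≤ μ G + 1/4 := h1.trans (add_le_add_right hGc _)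
      have h3 : (1:ℝ≥0∞) - 1/4 ≤ μ G := tsub_le_iff_right.mpr h2
      calc (1:ℝ≥0∞)/2 ≤ 1 - 1/4 := by
            rw [one_div, one_div]
            refine ENNReal.le_sub_of_add_le_right (by norm_num) ?_
            calc (2:ℝ≥0∞)⁻¹ + 4⁻¹ ≤ 2⁻¹ + 2⁻¹ :=
                  add_le_add_right (ENNReal.inv_le_inv.mpr (by norm_num)) _
              _ = 1 := by rw [← one_div, ENNReal.add_halves]
        _ ≤ μ G := h3
    -- distance bounds
    have hcD : dist (z j) (z k) ≤ 2 * D := by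
      calc dist (z j) (z k) ≤ dist (z j) x₀ + dist x₀ (z k) := dist_triangle _ _ _
        _ ≤ D + D := add_le_add (hDbound _ (hFz1 j))
            (by rw [dist_comm]; exact hDbound _ (hFz1 k))
        _ = 2 * D := by ring
    have hkey := mid_integral_gap (μ := μ) hp hm hη.le hcon hcD hgap
    -- F values are close to V
    have hFsmall : ∀ i, N + 1 ≤ i → F (z i) ≤ V + ENNReal.ofReal η / 8 := by
      intro i hi
      refine (hz i).le.trans (add_le_add_right ?_ V)
      refine le_trans ?_ hN.le
      rw [ENNReal.inv_le_inv]
      have : N ≤ i + 1 := by omega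
      exact_mod_cast this
    set δ : ℝ≥0∞ := ENNReal.ofReal η with hδ
    have hchain : V + δ * (1/2) ≤ V + δ / 8 := by
      calc V + δ * (1/2) ≤ F m + δ * μ G := by
            refine add_le_add (hVF m) ?_
            rw [mul_comm δ (1/2), mul_comm δ (μ G)]
            exact mul_le_mul_left hGmeas δ
        _ ≤ (F (z j) + F (z k)) / 2 := hkey
        _ ≤ ((V + δ/8) + (V + δ/8)) / 2 := by
            gcongr
            exacts [hFsmall j hj, hFsmall k hk]
        _ = V + δ/8 := by rw [ENNReal.add_div, ENNReal.add_halves]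
    have hfinal : δ * (1/2) ≤ δ / 8 := (ENNReal.add_le_add_iff_left hVt).mp hchain
    rw [hδ] at hfinal
    rw [mul_one_div, ← ENNReal.ofReal_ofNat 2, ← ENNReal.ofReal_ofNat 8,
      ← ENNReal.ofReal_div_of_pos (by norm_num), ← ENNReal.ofReal_div_of_pos (by norm_num)]
        at hfinal
    have := (ENNReal.ofReal_le_ofReal_iff (by positivity)).mp hfinal
    linarith
  -- limit
  obtain ⟨zs, hzs⟩ := cauchySeq_tendsto_of_complete hcauchy
  have hFstar : F zs ≤ V := by
    have hpt : ∀ x : M, edist x zs ^ p = liminf (fun k => edist x (z k) ^ p) atTop := by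
      intro x
      refine (Filter.Tendsto.liminf_eq ?_).symm
      exact (ENNReal.continuous_rpow_const.tendsto _).comp
        (Filter.Tendsto.edist tendsto_const_nhds hzs)
    have h1 : F zs = ∫⁻ x, liminf (fun k => edist x (z k) ^ p) atTop ∂μ :=
      lintegral_congr hpt
    have h2 : ∫⁻ x, liminf (fun k => edist x (z k) ^ p) atTop ∂μ ≤
        liminf (fun k => F (z k)) atTop :=
      lintegral_liminf_le fun k => edist_pow_meas p (z k)
    have h3 : liminf (fun k => F (z k)) atTop ≤ V := by
      refine ENNReal.le_of_forall_pos_le_add fun ε' hε' _ => ?_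
      obtain ⟨K, hK⟩ := ENNReal.exists_inv_nat_lt
        (a := (ε' : ℝ≥0∞)) (by exact_mod_cast hε'.ne')
      refine (liminf_le_limsup).trans (limsup_le_of_le (h := ?_))
      rw [eventually_atTop]
      refine ⟨K, fun i hi => ?_⟩
      refine (hz i).le.trans (add_le_add_right ?_ V)
      refine le_trans ?_ hK.le
      rw [ENNReal.inv_le_inv]
      exact_mod_cast Nat.le_succ_of_le hi
    rw [h1]
    exact h2.trans h3
  have hmin : F zs = V := le_antisymm hFstar (hVF zs)
  exact ⟨zs, hmin, fun y hy => huniq y zs hy hmin⟩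


private lemma lintegral_coupling {p : ℝ} {μ : Measure M}
    (z : M) {π : Measure (M × M)} (hπ : π ∈ Couplings μ (Measure.dirac z)) :
    ∫⁻ w, edist w.1 w.2 ^ p ∂π = ∫⁻ x, edist x z ^ p ∂μ := by
  obtain ⟨h1, h2⟩ := hπ
  have hz : π (Prod.snd ⁻¹' ({z}ᶜ)) = 0 := by
    rw [← Measure.map_apply measurable_snd (measurableSet_singleton z).compl, h2]
    simp
  have hae : ∀ᵐ w ∂π, w.2 = z := by
    rw [ae_iff]
    exact measure_mono_null (fun w hw => by simpa using hw) hz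
  have hcongr : ∀ᵐ w ∂π, edist w.1 w.2 ^ p = edist w.1 z ^ p := by
    filter_upwards [hae] with w hw
    rw [hw]
  rw [lintegral_congr_ae hcongr, ← lintegral_map (edist_pow_meas p z) measurable_fst, h1]

private lemma prod_mem_couplings (μ : Measure M) [IsProbabilityMeasure μ] (z : M) :
    μ.prod (Measure.dirac z) ∈ Couplings μ (Measure.dirac z) := by
  constructor
  · rw [Measure.map_fst_prod]; simp
  · rw [Measure.map_snd_prod]; simp

private lemma wp_dirac (p : ℝ) (μ : Measure M) [IsProbabilityMeasure μ] (z : M) :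
    Wp p μ (Measure.dirac z) = (∫⁻ x, edist x z ^ p ∂μ) ^ (1 / p) := by
  unfold Wp
  congr 1
  apply le_antisymm
  · exact iInf₂_le_of_le _ (prod_mem_couplings μ z)
      (le_of_eq (lintegral_coupling z (prod_mem_couplings μ z)))
  · exact le_iInf₂ fun π hπ => (lintegral_coupling z hπ).ge

private lemma rpow_iInf {ι : Sort*} [Nonempty ι] {p : ℝ} (hp : 0 < p) (f : ι → ℝ≥0∞) :
    ⨅ i, f i ^ (1 / p) = (⨅ i, f i) ^ (1 / p) := by
  have hp' : (0:ℝ) < 1 / p := by positivity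
  apply le_antisymm
  · have h1 : ∀ i, ((⨅ j, f j ^ (1/p)) ^ p) ≤ f i := by
      intro i
      have := iInf_le (fun j => f j ^ (1/p)) i
      calc (⨅ j, f j ^ (1/p)) ^ p ≤ (f i ^ (1/p)) ^ p :=
            ENNReal.rpow_le_rpow this hp.le
        _ = f i := by
            rw [← ENNReal.rpow_mul, one_div_mul_cancel hp.ne', ENNReal.rpow_one]
    have h2 : ((⨅ j, f j ^ (1/p)) ^ p) ≤ ⨅ i, f i := le_iInf h1
    calc ⨅ j, f j ^ (1/p) = (((⨅ j, f j ^ (1/p)) ^ p)) ^ (1/p) := by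
          rw [← ENNReal.rpow_mul, mul_one_div_cancel hp.ne', ENNReal.rpow_one]
      _ ≤ (⨅ i, f i) ^ (1/p) := ENNReal.rpow_le_rpow h2 hp'.le
  · exact le_iInf fun i => ENNReal.rpow_le_rpow (iInf_le f i) hp'.le

private lemma distToSet_diracs {p : ℝ} (hp : 0 < p) (μ : Measure M)
    [IsProbabilityMeasure μ] [Nonempty M] :
    distToSet (Wp p) μ (Diracs M) = (⨅ z : M, ∫⁻ x, edist x z ^ p ∂μ) ^ (1 / p) := by
  unfold distToSet Diracs
  rw [iInf_range]
  simp_rw [wp_dirac p μ]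
  exact rpow_iInf hp _

end Main

lemma isCAT0_of_innerProductSpace {E : Type*} [NormedAddCommGroup E]
    [InnerProductSpace ℝ E] : IsCAT0 E := by
  intro z y
  refine ⟨midpoint ℝ y z, fun x => le_of_eq ?_⟩
  set u := x - y with hu
  set v := x - z with hv
  have hmid : x - midpoint ℝ y z = (2⁻¹ : ℝ) • (u + v) := by
    rw [midpoint_eq_smul_add, invOf_eq_inv, hu, hv]
    module
  have h1 : dist x (midpoint ℝ y z) = 2⁻¹ * ‖u + v‖ := by
    rw [dist_eq_norm, hmid, norm_smul]
    norm_num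
  have h2 : dist x y = ‖u‖ := dist_eq_norm x y
  have h3 : dist x z = ‖v‖ := dist_eq_norm x z
  have h4 : dist y z = ‖u - v‖ := by
    rw [dist_eq_norm, hu, hv, ← norm_neg]
    congr 1
    abel
  have hpadd := norm_add_sq_real u v
  have hpsub := norm_sub_sq_real u v
  rw [h1, h2, h3, h4]
  nlinarith [hpadd, hpsub]

lemma isCAT0_euclidean {n : ℕ} : IsCAT0 (EuclideanSpace ℝ (Fin n)) :=
  isCAT0_of_innerProductSpace

private lemma hasUniqueProj_of {M : Type*} [MetricSpace M] [MeasurableSpace M]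
    [BorelSpace M] [CompleteSpace M] {p : ℝ} (hp : 1 < p) (hcat : IsCAT0 M) :
    ∀ μ ∈ WSpace M p, HasUniqueProj (Wp p) (Diracs M) μ := by
  rintro μ ⟨hprob, x₀, hx₀⟩
  haveI := hprob
  haveI : Nonempty M := ⟨x₀⟩
  have hp0 : (0:ℝ) < p := by linarith
  obtain ⟨zs, hzs, huniq⟩ := exists_unique_min hp hcat μ hx₀
  refine ⟨Measure.dirac zs, ⟨⟨zs, rfl⟩, ?_⟩, ?_⟩
  · rw [wp_dirac p μ zs, distToSet_diracs hp0 μ, hzs]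
  · rintro a ⟨⟨w, rfl⟩, hwa⟩
    rw [wp_dirac p μ w, distToSet_diracs hp0 μ] at hwa
    have hFw : (∫⁻ x, edist x w ^ p ∂μ) = ⨅ z : M, ∫⁻ x, edist x z ^ p ∂μ := by
      have h2 := congrArg (fun t : ℝ≥0∞ => t ^ p) hwa
      simpa only [← ENNReal.rpow_mul, one_div_mul_cancel hp0.ne', ENNReal.rpow_one] using h2
    exact congrArg Measure.dirac (huniq w hFw)

private lemma globalReach_top {Y : Type*} (ρ : Y → Y → ℝ≥0∞) (S A : Set Y)
    (h : ∀ y ∈ S, HasUniqueProj ρ A y) : globalReach ρ S A = ⊤ := by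
  refine eq_top_iff.mpr (le_iInf₂ fun a _ => ?_)
  exact le_sSup (fun y hy _ => h y hy)


open scoped Manifold in
/-- For every `p > 1`, every measure in `W_p(𝔼ⁿ)` over Euclidean `n`-space
has a unique nearest Dirac measure, i.e. the reach of the Dirac embedding
`𝔼ⁿ ↪ W_p(𝔼ⁿ)` is infinite; more generally the same holds for any Hadamard manifold
(complete, simply connected manifold whose Riemannian distance is nonpositively curved,
i.e. CAT(0)). -/
theorem reach_infinite_euclidean_and_hadamard {n : ℕ} :
    ∀ p : ℝ, 1 < p →
      ((∀ μ ∈ WSpace (EuclideanSpace ℝ (Fin n)) p,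
          HasUniqueProj (Wp p) (Diracs (EuclideanSpace ℝ (Fin n))) μ) ∧
        globalReach (Wp p) (WSpace (EuclideanSpace ℝ (Fin n)) p)
          (Diracs (EuclideanSpace ℝ (Fin n))) = ⊤) ∧
      (∀ (m : ℕ) (M : Type) [MetricSpace M] [CompleteSpace M] [SimplyConnectedSpace M]
          [MeasurableSpace M] [BorelSpace M]
          [ChartedSpace (EuclideanSpace ℝ (Fin m)) M] [IsManifold (𝓡 m) (⊤ : ℕ∞) M],
          IsGeodesicSpace M → IsCAT0 M →
          (∀ μ ∈ WSpace M p, HasUniqueProj (Wp p) (Diracs M) μ) ∧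
          globalReach (Wp p) (WSpace M p) (Diracs M) = ⊤) := by
  intro p hp
  refine ⟨⟨hasUniqueProj_of hp isCAT0_euclidean,
    globalReach_top _ _ _ (hasUniqueProj_of hp isCAT0_euclidean)⟩, ?_⟩
  intro m M _ _ _ _ _ _ _ _hgeo hcat
  exact ⟨hasUniqueProj_of hp hcat, globalReach_top _ _ _ (hasUniqueProj_of hp hcat)⟩
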